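/- arXiv:1608.01464 — 2 statements merged into one kernel-verified Lean document; each statement's English description precedes it below -/
import Mathlib

section
/- Let T be a finite tree and Aut(T) its automorphism group. Then the number of Aut(T)-orbits of vertices of T plus the number of Aut(T)-orbits of edges of T equals 1 plus the number of Aut(T)-orbits of arcs of T, where an arc is an ordered pair (u, v) of vertices such that {u, v} is an edge. -/
open SimpleGraph Finset

set_option linter.unusedSectionVars false

namespace DissymAux

variable {V : Type} [Fintype V] {T : SimpleGraph V}

/-- In a tree, any path realizes the distance. -/
lemma path_length_eq_dist (hT : T.IsTree) {u v : V}
    (p : T.Walk u v) (hp : p.IsPath) : p.length = T.dist u v := by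
  obtain ⟨q, hq, hql⟩ := hT.isConnected.exists_path_of_dist u v
  have h := (hT.existsUnique_path u v).unique hp hq
  rw [h, hql]

/-- Distance dichotomy with respect to an edge. -/
lemma dist_dichotomy (hT : T.IsTree) {u v : V} (h : T.Adj u v) (w : V) :
    T.dist w v = T.dist w u + 1 ∨ T.dist w u = T.dist w v + 1 := by
  classical
  obtain ⟨p, hp, hl⟩ := hT.isConnected.exists_path_of_dist w u
  by_cases hv : v ∈ p.support
  · right
    have ht : (p.takeUntil v hv).IsPath := hp.takeUntil hv
    have hd : (p.dropUntil v hv).IsPath := hp.dropUntil hv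
    have hdrop : (p.dropUntil v hv).length = 1 := by
      have := path_length_eq_dist hT _ hd
      rwa [(SimpleGraph.dist_eq_one_iff_adj).mpr h.symm] at this
    have := congrArg Walk.length (p.take_spec hv)
    rw [Walk.length_append] at this
    have htl := path_length_eq_dist hT _ ht
    omega
  · left
    have hcp : (p.concat h).IsPath := by
      rw [← Walk.isPath_reverse_iff, Walk.reverse_concat]
      exact (hp.reverse).cons (by simpa using hv)
    have := path_length_eq_dist hT _ hcp
    rw [Walk.length_concat] at this
    omega

/-- The neighbor of `v` on the way to `w` is unique. -/
lemma toward_unique (hT : T.IsTree) {v w u₁ u₂ : V}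
    (h1 : T.Adj u₁ v) (h2 : T.Adj u₂ v)
    (d1 : T.dist w u₁ < T.dist w v) (d2 : T.dist w u₂ < T.dist w v) : u₁ = u₂ := by
  classical
  have key : ∀ (u : V) (h : T.Adj u v), T.dist w u < T.dist w v →
      ∃ p : T.Walk w u, p.IsPath ∧ ((p.concat h).IsPath ∧ (p.concat h).length = T.dist w v) := by
    intro u h hd
    obtain ⟨p, hp, hl⟩ := hT.isConnected.exists_path_of_dist w u
    have hv : v ∉ p.support := by
      intro hv
      have := path_length_eq_dist hT _ (hp.takeUntil hv)
      have hle := p.length_takeUntil_le hv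
      omega
    have hcp : (p.concat h).IsPath := by
      rw [← Walk.isPath_reverse_iff, Walk.reverse_concat]
      exact (hp.reverse).cons (by simpa using hv)
    refine ⟨p, hp, hcp, ?_⟩
    exact path_length_eq_dist hT _ hcp
  obtain ⟨p1, hp1, hc1, _⟩ := key u₁ h1 d1
  obtain ⟨p2, hp2, hc2, _⟩ := key u₂ h2 d2
  have heq : p1.concat h1 = p2.concat h2 := (hT.existsUnique_path w v).unique hc1 hc2
  have := congrArg (fun q : T.Walk w v => q.reverse.getVert 1) heq
  simpa [Walk.reverse_concat] using this

/-- The set of vertices strictly closer to `v` than to `u`. -/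
noncomputable def side (T : SimpleGraph V) (u v : V) : Finset V :=
  univ.filter (fun w => T.dist w v < T.dist w u)

lemma side_card_add (hT : T.IsTree) {u v : V} (h : T.Adj u v) :
    (side T u v).card + (side T v u).card = Fintype.card V := by
  have hrw : side T v u = univ.filter (fun w => ¬ T.dist w v < T.dist w u) := by
    apply Finset.filter_congr
    intro w _
    have := dist_dichotomy hT h w
    constructor <;> intro <;> omega
  rw [side, hrw, Finset.card_filter_add_card_filter_not, card_univ]

lemma mem_side {u v w : V} : w ∈ side T u v ↔ T.dist w v < T.dist w u := by
  simp [side]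

lemma heavy_unique (hT : T.IsTree) {v u₁ u₂ : V}
    (h1 : T.Adj u₁ v) (h2 : T.Adj u₂ v)
    (c1 : 2 * (side T u₁ v).card ≤ Fintype.card V)
    (c2 : 2 * (side T u₂ v).card ≤ Fintype.card V) : u₁ = u₂ := by
  classical
  by_contra hne
  have hdisj : Disjoint (side T v u₁) (side T v u₂) := by
    rw [Finset.disjoint_left]
    intro w hw1 hw2
    exact hne (toward_unique hT h1 h2 (mem_side.mp hw1) (mem_side.mp hw2))
  have hv1 : v ∉ side T v u₁ := by simp [mem_side, SimpleGraph.dist_self]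
  have hv2 : v ∉ side T v u₂ := by simp [mem_side, SimpleGraph.dist_self]
  have hsub : side T v u₁ ∪ side T v u₂ ⊆ univ.erase v := by
    intro w hw
    rcases Finset.mem_union.mp hw with hw | hw
    · exact Finset.mem_erase.mpr ⟨fun e => hv1 (e ▸ hw), mem_univ w⟩
    · exact Finset.mem_erase.mpr ⟨fun e => hv2 (e ▸ hw), mem_univ w⟩
  have hcard : (side T v u₁).card + (side T v u₂).card ≤ Fintype.card V - 1 := by
    have := Finset.card_le_card hsub
    rwa [Finset.card_union_of_disjoint hdisj, Finset.card_erase_of_mem (mem_univ v),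
      card_univ] at this
  have e1 := side_card_add hT h1
  have e2 := side_card_add hT h2
  have hn : 1 ≤ Fintype.card V := Fintype.card_pos_iff.mpr hT.isConnected.nonempty
  omega

lemma iso_dist_le (hc : T.Connected) (φ : T ≃g T) (u v : V) :
    T.dist (φ u) (φ v) ≤ T.dist u v := by
  obtain ⟨p, hl⟩ := (hc u v).exists_walk_length_eq_dist
  have := SimpleGraph.dist_le (p.map φ.toHom)
  rwa [Walk.length_map, hl] at this

lemma iso_dist (hc : T.Connected) (φ : T ≃g T) (u v : V) :
    T.dist (φ u) (φ v) = T.dist u v := by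
  refine le_antisymm (iso_dist_le hc φ u v) ?_
  have := iso_dist_le hc φ.symm (φ u) (φ v)
  simpa using this

lemma side_card_iso (hc : T.Connected) (φ : T ≃g T) (u v : V) :
    (side T (φ u) (φ v)).card = (side T u v).card := by
  classical
  refine Finset.card_bij (fun w _ => φ.symm w) ?_ ?_ ?_
  · intro w hw
    rw [mem_side] at hw ⊢
    have h1 := iso_dist hc φ.symm w (φ v)
    have h2 := iso_dist hc φ.symm w (φ u)
    simp only [RelIso.symm_apply_apply] at h1 h2
    omega
  · intro a _ b _ hab
    exact φ.symm.injective hab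
  · intro w hw
    refine ⟨φ w, ?_, by simp⟩
    rw [mem_side] at hw ⊢
    have h1 := iso_dist hc φ w v
    have h2 := iso_dist hc φ w u
    omega

/-- The type of arcs. -/
abbrev Arc (T : SimpleGraph V) := {p : V × V // T.Adj p.1 p.2}

/-- Action of an automorphism on arcs. -/
def actA (φ : T ≃g T) (a : Arc T) : Arc T :=
  ⟨(φ a.val.1, φ a.val.2), φ.map_adj_iff.mpr a.prop⟩

/-- Action of an automorphism on vertices plus edges. -/
def actS (φ : T ≃g T) : V ⊕ ↥T.edgeSet → V ⊕ ↥T.edgeSet :=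
  Sum.map φ φ.mapEdgeSet

lemma actS_leftInverse (φ : T ≃g T) (x : V ⊕ ↥T.edgeSet) :
    actS φ.symm (actS φ x) = x := by
  rcases x with x | e
  · simp [actS]
  · refine congrArg Sum.inr (Subtype.ext ?_)
    show Sym2.map _ (Sym2.map _ e.val) = e.val
    rw [Sym2.map_map]
    have : (⇑(RelIso.toRelEmbedding φ.symm).toRelHom ∘ ⇑(RelIso.toRelEmbedding φ).toRelHom)
        = id := funext fun x => φ.symm_apply_apply x
    rw [this, Sym2.map_id, id_eq]

lemma actA_leftInverse (φ : T ≃g T) (a : Arc T) : actA φ.symm (actA φ a) = a := by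
  refine Subtype.ext (Prod.ext ?_ ?_) <;> simp [actA]

/-- The dissymmetry map from arcs to vertices plus edges. -/
noncomputable def phi (T : SimpleGraph V) [Fintype V] : Arc T → V ⊕ ↥T.edgeSet :=
  fun a => if 2 * (side T a.val.1 a.val.2).card ≤ Fintype.card V
    then Sum.inl a.val.2
    else Sum.inr ⟨s(a.val.1, a.val.2), a.prop⟩

lemma phi_injective (hT : T.IsTree) : Function.Injective (phi T) := by
  intro a b hab
  unfold phi at hab
  by_cases h1 : 2 * (side T a.val.1 a.val.2).card ≤ Fintype.card V <;>
    by_cases h2 : 2 * (side T b.val.1 b.val.2).card ≤ Fintype.card V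
  · rw [if_pos h1, if_pos h2] at hab
    have hhead : a.val.2 = b.val.2 := Sum.inl.inj hab
    have htail : a.val.1 = b.val.1 := by
      refine heavy_unique hT a.prop (v := a.val.2) ?_ h1 ?_
      · rw [hhead]; exact b.prop
      · rw [hhead]; exact h2
    exact Subtype.ext (Prod.ext htail hhead)
  · rw [if_pos h1, if_neg h2] at hab
    exact absurd hab (by simp)
  · rw [if_neg h1, if_pos h2] at hab
    exact absurd hab (by simp)
  · rw [if_neg h1, if_neg h2] at hab
    have := Sum.inr.inj hab
    have hsym : s(a.val.1, a.val.2) = s(b.val.1, b.val.2) := congrArg Subtype.val this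
    rw [Sym2.eq_iff] at hsym
    rcases hsym with ⟨hx, hy⟩ | ⟨hx, hy⟩
    · exact Subtype.ext (Prod.ext hx hy)
    · exfalso
      have hadd := side_card_add hT a.prop
      rw [← hx, ← hy] at h2
      omega

lemma phi_equivariant (hT : T.IsTree) (φ : T ≃g T) (a : Arc T) :
    phi T (actA φ a) = actS φ (phi T a) := by
  have hs : (side T (φ a.val.1) (φ a.val.2)).card = (side T a.val.1 a.val.2).card :=
    side_card_iso hT.isConnected φ a.val.1 a.val.2
  unfold phi actA actS
  by_cases h : 2 * (side T a.val.1 a.val.2).card ≤ Fintype.card V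
  · rw [if_pos h, if_pos (by simpa [hs] using h)]
    rfl
  · rw [if_neg h, if_neg (by simpa [hs] using h)]
    refine congrArg Sum.inr (Subtype.ext ?_)
    show s(φ a.val.1, φ a.val.2) = Sym2.map _ s(a.val.1, a.val.2)
    rw [Sym2.map_pair_eq]
    rfl

lemma card_arc (hT : T.IsTree) :
    Nat.card (Arc T) + 1 = Nat.card (V ⊕ ↥T.edgeSet) := by
  classical
  have hdart : Nat.card (Arc T) = Nat.card T.Dart := by
    refine Nat.card_congr ⟨fun a => ⟨a.val, a.prop⟩, fun d => ⟨d.toProd, d.adj⟩, ?_, ?_⟩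
    · intro a; rfl
    · intro d; rfl
  rw [hdart]
  simp only [Nat.card_eq_fintype_card]
  rw [SimpleGraph.dart_card_eq_twice_card_edges, Fintype.card_sum,
    SimpleGraph.edgeFinset_card]
  have he : T.edgeFinset.card + 1 = Fintype.card V := hT.card_edgeFinset
  rw [SimpleGraph.edgeFinset_card] at he
  omega

lemma exists_center (hT : T.IsTree) :
    ∃ c : V ⊕ ↥T.edgeSet, (∀ a, phi T a ≠ c) ∧ (∀ x, x ∉ Set.range (phi T) → x = c) := by
  classical
  set K : Finset (V ⊕ ↥T.edgeSet) := (univ.image (phi T))ᶜ with hK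
  have hcard : K.card = 1 := by
    rw [hK, Finset.card_compl, Finset.card_image_of_injective _ (phi_injective hT), card_univ]
    have := card_arc hT
    simp only [Nat.card_eq_fintype_card] at this
    omega
  obtain ⟨c, hc⟩ := Finset.card_eq_one.mp hcard
  have hmem : ∀ x, x ∈ K ↔ x ∉ Set.range (phi T) := by
    intro x
    rw [hK, Finset.mem_compl, Finset.mem_image]
    simp [Set.mem_range]
  refine ⟨c, ?_, ?_⟩
  · intro a ha
    have : c ∈ K := hc ▸ Finset.mem_singleton_self c
    exact (hmem c).mp this ⟨a, ha⟩
  · intro x hx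
    have : x ∈ K := (hmem x).mpr hx
    rw [hc, Finset.mem_singleton] at this
    exact this

lemma center_fixed (hT : T.IsTree) {c : V ⊕ ↥T.edgeSet}
    (hc : ∀ a, phi T a ≠ c) (huniq : ∀ x, x ∉ Set.range (phi T) → x = c)
    (φ : T ≃g T) : actS φ c = c := by
  refine huniq _ ?_
  rintro ⟨a, ha⟩
  have h1 : actS φ.symm (phi T a) = c := by rw [ha]; exact actS_leftInverse φ c
  have h2 : phi T (actA φ.symm a) = actS φ.symm (phi T a) := phi_equivariant hT φ.symm a
  exact hc (actA φ.symm a) (h2.trans h1)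

/-- Splitting a quotient of a sum into a sum of quotients. -/
def quotSumEquiv {X Y : Type} (rX : X → X → Prop) (rY : Y → Y → Prop)
    (r : X ⊕ Y → X ⊕ Y → Prop)
    (hXX : ∀ a b, r (Sum.inl a) (Sum.inl b) ↔ rX a b)
    (hYY : ∀ a b, r (Sum.inr a) (Sum.inr b) ↔ rY a b)
    (hXY : ∀ a b, ¬ r (Sum.inl a) (Sum.inr b))
    (hYX : ∀ a b, ¬ r (Sum.inr a) (Sum.inl b)) :
    Quot r ≃ (Quot rX ⊕ Quot rY) where
  toFun := Quot.lift
    (Sum.elim (fun a => Sum.inl (Quot.mk rX a)) (fun b => Sum.inr (Quot.mk rY b)))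
    (by rintro (a | a) (b | b) h
        · exact congrArg Sum.inl (Quot.sound ((hXX a b).mp h))
        · exact absurd h (hXY a b)
        · exact absurd h (hYX a b)
        · exact congrArg Sum.inr (Quot.sound ((hYY a b).mp h)))
  invFun := Sum.elim
    (Quot.lift (fun a => Quot.mk r (Sum.inl a)) (fun a b h => Quot.sound ((hXX a b).mpr h)))
    (Quot.lift (fun b => Quot.mk r (Sum.inr b)) (fun a b h => Quot.sound ((hYY a b).mpr h)))
  left_inv := by
    intro q
    induction q using Quot.ind with
    | _ x => rcases x with a | a <;> rfl
  right_inv := by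
    rintro (a | a) <;>
      (induction a using Quot.ind with
       | _ x => rfl)

end DissymAux

open DissymAux in
/-- The dissymmetry theorem for trees: for a finite tree `T`, the number of orbits of
vertices under `Aut(T)` plus the number of orbits of edges equals `1` plus the number of
orbits of arcs (ordered pairs `(u, v)` with `{u, v}` an edge). -/
theorem dissymmetry_theorem_for_trees {V : Type} [Fintype V]
    (T : SimpleGraph V) (hT : T.IsTree) :
    Nat.card (Quot (fun u v : V => ∃ φ : T ≃g T, φ u = v)) +
      Nat.card (Quot (fun (e e' : ↥T.edgeSet) =>
        ∃ φ : T ≃g T, Sym2.map (fun x => φ x) e.val = e'.val)) =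
    1 + Nat.card (Quot (fun (p q : {p : V × V // T.Adj p.1 p.2}) =>
        ∃ φ : T ≃g T, φ p.val.1 = q.val.1 ∧ φ p.val.2 = q.val.2)) := by
  classical
  obtain ⟨c, hc, huniq⟩ := exists_center hT
  set rV : V → V → Prop := fun u v => ∃ φ : T ≃g T, φ u = v with hrV
  set rE : ↥T.edgeSet → ↥T.edgeSet → Prop := fun e e' =>
    ∃ φ : T ≃g T, Sym2.map (fun x => φ x) e.val = e'.val with hrE
  set rA : Arc T → Arc T → Prop := fun p q =>
    ∃ φ : T ≃g T, φ p.val.1 = q.val.1 ∧ φ p.val.2 = q.val.2 with hrA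
  set rPU : PUnit → PUnit → Prop := fun _ _ => True with hrPU
  set rS : (V ⊕ ↥T.edgeSet) → (V ⊕ ↥T.edgeSet) → Prop :=
    fun x y => ∃ φ : T ≃g T, actS φ x = y with hrS
  set rP : (PUnit ⊕ Arc T) → (PUnit ⊕ Arc T) → Prop :=
    fun a b => ∃ φ : T ≃g T, Sum.map id (actA φ) a = b with hrP
  -- the bijection g
  set g : PUnit ⊕ Arc T → V ⊕ ↥T.edgeSet := Sum.elim (fun _ => c) (phi T) with hg
  have ginj : Function.Injective g := by
    rintro (⟨⟩ | a) (⟨⟩ | b) h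
    · rfl
    · exact absurd (Eq.symm h) (hc b)
    · exact absurd h (hc _)
    · exact congrArg Sum.inr (phi_injective hT h)
  have gsurj : Function.Surjective g := by
    intro x
    by_cases hx : x ∈ Set.range (phi T)
    · obtain ⟨a, ha⟩ := hx
      exact ⟨Sum.inr a, ha⟩
    · exact ⟨Sum.inl PUnit.unit, (huniq x hx).symm⟩
  have hgeq : ∀ (φ : T ≃g T) (x : PUnit ⊕ Arc T),
      g (Sum.map id (actA φ) x) = actS φ (g x) := by
    rintro φ (u | a)
    · exact (center_fixed hT hc huniq φ).symm
    · exact phi_equivariant hT φ a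
  -- equivalences of quotients
  have eq1 : Quot rS ≃ (Quot rV ⊕ Quot rE) := by
    refine quotSumEquiv rV rE rS ?_ ?_ ?_ ?_
    · intro a b
      constructor
      · rintro ⟨φ, h⟩
        exact ⟨φ, by simpa [actS] using h⟩
      · rintro ⟨φ, h⟩
        exact ⟨φ, by simp [actS, h]⟩
    · intro a b
      constructor
      · rintro ⟨φ, h⟩
        refine ⟨φ, ?_⟩
        have := Sum.inr.inj h
        exact congrArg Subtype.val this
      · rintro ⟨φ, h⟩
        refine ⟨φ, congrArg Sum.inr (Subtype.ext h)⟩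
    · rintro a b ⟨φ, h⟩
      simp [actS] at h
    · rintro a b ⟨φ, h⟩
      simp [actS] at h
  have eq3 : Quot rP ≃ (Quot rPU ⊕ Quot rA) := by
    refine quotSumEquiv rPU rA rP ?_ ?_ ?_ ?_
    · intro a b
      simp only [hrPU, iff_true]
      exact ⟨RelIso.refl T.Adj, by cases a; cases b; rfl⟩
    · intro a b
      constructor
      · rintro ⟨φ, h⟩
        have := Sum.inr.inj h
        have h' := congrArg Subtype.val this
        exact ⟨φ, congrArg Prod.fst h', congrArg Prod.snd h'⟩
      · rintro ⟨φ, h1, h2⟩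
        exact ⟨φ, congrArg Sum.inr (Subtype.ext (Prod.ext h1 h2))⟩
    · rintro a b ⟨φ, h⟩
      simp at h
    · rintro a b ⟨φ, h⟩
      simp at h
  have eq2 : Quot rP ≃ Quot rS := by
    refine Quot.congr (Equiv.ofBijective g ⟨ginj, gsurj⟩) ?_
    intro a b
    constructor
    · rintro ⟨φ, h⟩
      refine ⟨φ, ?_⟩
      show actS φ (g a) = g b
      rw [← hgeq, h]
    · rintro ⟨φ, h⟩
      refine ⟨φ, ?_⟩
      have h' : g (Sum.map id (actA φ) a) = g b := by
        rw [hgeq]; exact h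
      exact ginj h'
  have hPU : Nat.card (Quot rPU) = 1 := by
    haveI : Subsingleton (Quot rPU) := by
      constructor
      intro a b
      induction a using Quot.ind with
      | _ x =>
        induction b using Quot.ind with
        | _ y => cases x; cases y; rfl
    exact Nat.card_eq_one_iff_unique.mpr ⟨inferInstance, ⟨Quot.mk _ PUnit.unit⟩⟩
  calc Nat.card (Quot rV) + Nat.card (Quot rE)
      = Nat.card (Quot rV ⊕ Quot rE) := (Nat.card_sum).symm
    _ = Nat.card (Quot rS) := (Nat.card_congr eq1).symm
    _ = Nat.card (Quot rP) := (Nat.card_congr eq2).symm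
    _ = Nat.card (Quot rPU ⊕ Quot rA) := Nat.card_congr eq3
    _ = Nat.card (Quot rPU) + Nat.card (Quot rA) := Nat.card_sum
    _ = 1 + Nat.card (Quot rA) := by rw [hPU]
end

section
/- Let T be a finite tree with at least 3 vertices and Aut(T) its automorphism group. Then the number of Aut(T)-orbits of internal vertices of T plus the number of Aut(T)-orbits of edges of T whose two endpoints are both internal equals 1 plus the number of Aut(T)-orbits of arcs (u, v) of T whose two endpoints are both internal. -/
set_option linter.unusedSectionVars false
set_option maxHeartbeats 1000000


/-- A vertex of a simple graph is a leaf if it has exactly one neighbour. -/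
def IsLeafVert {V : Type} (T : SimpleGraph V) (v : V) : Prop :=
  ∃! u, T.Adj v u

namespace DissymmetryAux

open SimpleGraph

variable {V : Type} [DecidableEq V] {T : SimpleGraph V}

/-- helper: concat of a path with a new vertex is a path -/
lemma isPath_concat {u v w : V} {p : T.Walk u v} (hp : p.IsPath) (h : T.Adj v w)
    (hw : w ∉ p.support) : (p.concat h).IsPath := by
  rw [← SimpleGraph.Walk.isPath_reverse_iff, SimpleGraph.Walk.reverse_concat]
  rw [SimpleGraph.Walk.cons_isPath_iff]
  exact ⟨hp.reverse, by simpa using hw⟩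

/-- In a tree, every path is a geodesic. -/
lemma path_length_eq_dist (hT : T.IsTree) {u v : V} (p : T.Walk u v) (hp : p.IsPath) :
    p.length = T.dist u v := by
  obtain ⟨q, hq, hql⟩ := hT.isConnected.exists_path_of_dist u v
  have := (hT.existsUnique_path u v).unique hp hq
  rw [this, hql]

/-- the canonical path between two vertices of a tree -/
noncomputable def tpath (hT : T.IsTree) (u v : V) : T.Walk u v :=
  (hT.existsUnique_path u v).choose

lemma tpath_isPath (hT : T.IsTree) (u v : V) : (tpath hT u v).IsPath :=
  (hT.existsUnique_path u v).choose_spec.1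

lemma tpath_unique (hT : T.IsTree) {u v : V} (p : T.Walk u v) (hp : p.IsPath) :
    p = tpath hT u v :=
  (hT.existsUnique_path u v).choose_spec.2 p hp

lemma tpath_length (hT : T.IsTree) (u v : V) : (tpath hT u v).length = T.dist u v :=
  path_length_eq_dist hT _ (tpath_isPath hT u v)

/-- splitting distances at a vertex of a path -/
lemma dist_split (hT : T.IsTree) {u w z : V} {p : T.Walk u w} (hp : p.IsPath)
    (hz : z ∈ p.support) : T.dist u z + T.dist z w = T.dist u w := by
  have h1 := path_length_eq_dist hT _ (hp.takeUntil hz)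
  have h2 := path_length_eq_dist hT _ (hp.dropUntil hz)
  have h3 := path_length_eq_dist hT p hp
  have h4 : (p.takeUntil z hz).length + (p.dropUntil z hz).length = p.length := by
    rw [← SimpleGraph.Walk.length_append, SimpleGraph.Walk.take_spec]
  omega

lemma mem_tpath_of_dist_add (hT : T.IsTree) {u w z : V}
    (h : T.dist u z + T.dist z w = T.dist u w) : z ∈ (tpath hT u w).support := by
  have hp : ((tpath hT u z).append (tpath hT z w)).length = T.dist u w := by
    rw [SimpleGraph.Walk.length_append, tpath_length, tpath_length, h]
  have hpath := SimpleGraph.Walk.isPath_of_length_eq_dist _ hp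
  have heq := tpath_unique hT _ hpath
  rw [← heq, SimpleGraph.Walk.mem_support_append_iff]
  exact Or.inl (SimpleGraph.Walk.end_mem_support _)

/-- two vertices on a common path: distances add up one way or the other -/
lemma two_on_path (hT : T.IsTree) {u w z₁ z₂ : V} {p : T.Walk u w} (hp : p.IsPath)
    (h1 : z₁ ∈ p.support) (h2 : z₂ ∈ p.support) :
    T.dist u z₂ + T.dist z₂ z₁ = T.dist u z₁ ∨
      T.dist u z₁ + T.dist z₁ z₂ = T.dist u z₂ := by
  have hsp := SimpleGraph.Walk.take_spec p h1
  have h2' : z₂ ∈ ((p.takeUntil z₁ h1).append (p.dropUntil z₁ h1)).support := by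
    rw [hsp]; exact h2
  rw [SimpleGraph.Walk.mem_support_append_iff] at h2'
  rcases h2' with h2' | h2'
  · exact Or.inl (dist_split hT (hp.takeUntil h1) h2')
  · right
    have ha := dist_split hT (hp.dropUntil h1) h2'
    have hb := dist_split hT hp h1
    have hc := dist_split hT hp h2
    omega

lemma eq_of_dist_eq_on_path (hT : T.IsTree) {u w z₁ z₂ : V} {p : T.Walk u w} (hp : p.IsPath)
    (h1 : z₁ ∈ p.support) (h2 : z₂ ∈ p.support) (h : T.dist u z₁ = T.dist u z₂) : z₁ = z₂ := by
  have := two_on_path hT hp h1 h2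
  have hd : T.dist z₁ z₂ = 0 ∨ T.dist z₂ z₁ = 0 := by omega
  have hr : T.Reachable z₁ z₂ := hT.isConnected z₁ z₂
  rcases hd with hd | hd
  · exact (hr.dist_eq_zero_iff).mp hd
  · exact ((hr.symm.dist_eq_zero_iff).mp hd).symm

/-- adjacent vertices have different distances to any vertex -/
lemma adj_dist_ne (hT : T.IsTree) {a b : V} (hab : T.Adj a b) (x : V) :
    T.dist x a ≠ T.dist x b := by
  intro h
  by_cases hb : b ∈ (tpath hT x a).support
  · have := dist_split hT (tpath_isPath hT x a) hb
    have hba : T.dist b a = 1 := by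
      rw [SimpleGraph.dist_eq_one_iff_adj]; exact hab.symm
    omega
  · have hpath : ((tpath hT x a).concat hab).IsPath :=
      isPath_concat (tpath_isPath hT x a) hab hb
    have hlen := path_length_eq_dist hT _ hpath
    rw [SimpleGraph.Walk.length_concat, tpath_length] at hlen
    omega

lemma adj_dist_cases (hT : T.IsTree) {a b : V} (hab : T.Adj a b) (x : V) :
    T.dist x a = T.dist x b + 1 ∨ T.dist x b = T.dist x a + 1 := by
  have h1 : T.dist x a ≤ T.dist x b + T.dist b a :=
    hT.isConnected.dist_triangle
  have h2 : T.dist x b ≤ T.dist x a + T.dist a b :=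
    hT.isConnected.dist_triangle
  have hab1 : T.dist a b = 1 := by rw [SimpleGraph.dist_eq_one_iff_adj]; exact hab
  have hba1 : T.dist b a = 1 := by rw [SimpleGraph.dist_eq_one_iff_adj]; exact hab.symm
  have := adj_dist_ne hT hab x
  omega


section Parent

lemma exists_parent (hT : T.IsTree) {r v : V} (hvr : v ≠ r) :
    ∃ p, T.Adj v p ∧ T.dist p r + 1 = T.dist v r := by
  obtain ⟨q, hq, hql⟩ := hT.isConnected.exists_path_of_dist v r
  cases q with
  | nil => exact absurd rfl hvr
  | cons h q' =>
    refine ⟨_, h, ?_⟩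
    have h2 := path_length_eq_dist hT q' ((SimpleGraph.Walk.cons_isPath_iff _ _).mp hq).1
    rw [SimpleGraph.Walk.length_cons] at hql
    omega

lemma parent_unique (hT : T.IsTree) {r v p q : V} (hp : T.Adj v p) (hq : T.Adj v q)
    (hdp : T.dist p r + 1 = T.dist v r) (hdq : T.dist q r + 1 = T.dist v r) : p = q := by
  have hvp : T.dist v p = 1 := SimpleGraph.dist_eq_one_iff_adj.mpr hp
  have hvq : T.dist v q = 1 := SimpleGraph.dist_eq_one_iff_adj.mpr hq
  have hp' : p ∈ (tpath hT v r).support := mem_tpath_of_dist_add hT (by omega)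
  have hq' : q ∈ (tpath hT v r).support := mem_tpath_of_dist_add hT (by omega)
  exact eq_of_dist_eq_on_path hT (tpath_isPath hT v r) hp' hq' (by rw [hvp, hvq])

noncomputable def par (hT : T.IsTree) (r v : V) : V :=
  if h : v = r then v else Classical.choose (exists_parent hT h)

lemma par_spec (hT : T.IsTree) {r v : V} (h : v ≠ r) :
    T.Adj v (par hT r v) ∧ T.dist (par hT r v) r + 1 = T.dist v r := by
  rw [par, dif_neg h]; exact Classical.choose_spec (exists_parent hT h)

lemma par_adj (hT : T.IsTree) {r v : V} (h : v ≠ r) : T.Adj v (par hT r v) :=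
  (par_spec hT h).1

lemma par_dist (hT : T.IsTree) {r v : V} (h : v ≠ r) :
    T.dist (par hT r v) r + 1 = T.dist v r := (par_spec hT h).2

lemma par_eq (hT : T.IsTree) {r v p : V} (h : v ≠ r) (hp : T.Adj v p)
    (hd : T.dist p r + 1 = T.dist v r) : p = par hT r v :=
  parent_unique hT hp (par_adj hT h) hd (par_dist hT h)

end Parent

section IsoFacts

lemma iso_dist (hT : T.IsTree) (φ : T ≃g T) (u v : V) :
    T.dist (φ u) (φ v) = T.dist u v := by
  have key : ∀ (ψ : T ≃g T) (u v : V), T.dist (ψ u) (ψ v) ≤ T.dist u v := by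
    intro ψ u v
    obtain ⟨p, _, hl⟩ := hT.isConnected.exists_path_of_dist u v
    have := SimpleGraph.dist_le (p.map ψ.toHom)
    rwa [SimpleGraph.Walk.length_map, hl] at this
  refine le_antisymm (key φ u v) ?_
  have := key φ.symm (φ u) (φ v)
  simpa using this

lemma iso_leaf (φ : T ≃g T) (v : V) : IsLeafVert T (φ v) ↔ IsLeafVert T v := by
  have key : ∀ (ψ : T ≃g T) (w : V), IsLeafVert T w → IsLeafVert T (ψ w) := by
    rintro ψ w ⟨u, hu, hun⟩
    refine ⟨ψ u, ψ.map_adj_iff.mpr hu, ?_⟩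
    intro y hy
    have : T.Adj w (ψ.symm y) := by
      have := ψ.symm.map_adj_iff.mpr hy
      simpa using this
    have := hun _ this
    have : y = ψ (ψ.symm y) := by simp
    rw [this, hun _ ‹T.Adj w (ψ.symm y)›]
  constructor
  · intro h
    have := key φ.symm (φ v) h
    simpa using this
  · exact key φ v

lemma not_leaf_of_two (hv₁ : T.Adj v a) (hv₂ : T.Adj v b) (hab : a ≠ b) :
    ¬ IsLeafVert T v := by
  rintro ⟨u, hu, hun⟩
  exact hab ((hun a hv₁).trans (hun b hv₂).symm)

lemma no_adj_leaves [Fintype V] (hT : T.IsTree) (hcard : 3 ≤ Fintype.card V) {a b : V}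
    (hab : T.Adj a b) (ha : IsLeafVert T a) (hb : IsLeafVert T b) : False := by
  have hz : ∃ z : V, z ≠ a ∧ z ≠ b := by
    by_contra h
    push_neg at h
    have hsub : (Finset.univ : Finset V) ⊆ {a, b} := by
      intro z _
      rcases Classical.em (z = a) with rfl | hza
      · simp
      · simp [h z hza]
    have := Finset.card_le_card hsub
    have hle : ({a, b} : Finset V).card ≤ 2 := Finset.card_insert_le _ _ |>.trans (by simp)
    rw [Finset.card_univ] at this
    omega
  obtain ⟨z, hza, hzb⟩ := hz
  obtain ⟨u, hu, hun⟩ := ha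
  obtain ⟨w, hw, hwn⟩ := hb
  have h1' : par hT z a = b := by
    rw [hun _ (par_adj hT hza.symm), ← hun b hab]
  have h2' : par hT z b = a := by
    rw [hwn _ (par_adj hT hzb.symm), ← hwn a hab.symm]
  have d1 := par_dist hT hza.symm
  have d2 := par_dist hT hzb.symm
  rw [h1'] at d1
  rw [h2'] at d2
  omega

end IsoFacts



section Inverted

lemma exists_inverted [Fintype V] (hT : T.IsTree) (φ : T ≃g T)
    (hnofix : ∀ x : V, φ x ≠ x) : ∃ a b : V, T.Adj a b ∧ φ a = b ∧ φ b = a := by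
  by_contra hninv
  push_neg at hninv
  have hne : Nonempty V := hT.isConnected.nonempty
  obtain ⟨v, -, hmin⟩ := Finset.exists_min_image Finset.univ (fun x => T.dist x (φ x))
    ⟨Classical.arbitrary V, Finset.mem_univ _⟩
  set k := T.dist v (φ v) with hk
  have hmin' : ∀ x : V, k ≤ T.dist x (φ x) := fun x => hmin x (Finset.mem_univ x)
  have hk1 : 1 ≤ k := hT.isConnected.pos_dist_of_ne (Ne.symm (hnofix v))
  set w : ℕ → V := fun n => (fun x => par hT (φ x) x)^[n] v with hw
  have main : ∀ n, T.dist v (w n) = n ∧ T.dist v (φ (w n)) = n + k ∧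
      T.dist (w n) (φ (w n)) = k := by
    intro n
    induction n with
    | zero => simpa [hw] using hk.symm
    | succ n ih =>
      obtain ⟨ih1, ih2, ih3⟩ := ih
      have hxs : w (n + 1) = par hT (φ (w n)) (w n) :=
        Function.iterate_succ_apply' _ _ _
      set x := w n with hxdef
      set y := par hT (φ x) x with hydef
      have hxφ : x ≠ φ x := Ne.symm (hnofix x)
      have hadj : T.Adj x y := par_adj hT hxφ
      have hyd : T.dist y (φ x) + 1 = T.dist x (φ x) := par_dist hT hxφ
      have hadjφ : T.Adj (φ x) (φ y) := φ.map_adj_iff.mpr hadj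
      have hd1 : T.dist (φ x) (φ y) = 1 := SimpleGraph.dist_eq_one_iff_adj.mpr hadjφ
      have hxy1 : T.dist x y = 1 := SimpleGraph.dist_eq_one_iff_adj.mpr hadj
      have h2 : T.dist y (φ y) = k := by
        have htr := hT.isConnected.dist_triangle (u := y) (v := φ x) (w := φ y)
        have := hmin' y
        omega
      have h3 : T.dist v y = n + 1 := by
        have htr1 := hT.isConnected.dist_triangle (u := v) (v := x) (w := y)
        have htr2 := hT.isConnected.dist_triangle (u := v) (v := y) (w := φ x)
        omega
      have hd1' : T.dist (φ y) (φ x) = 1 := by rw [SimpleGraph.dist_comm]; exact hd1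
      have h4 : T.dist v (φ y) = (n + 1) + k := by
        rcases adj_dist_cases hT hadjφ v with hc | hc
        · exfalso
          have hymem : y ∈ (tpath hT v (φ x)).support :=
            mem_tpath_of_dist_add hT (by omega)
          have hφymem : φ y ∈ (tpath hT v (φ x)).support :=
            mem_tpath_of_dist_add hT (by omega)
          have h2p := two_on_path hT (tpath_isPath hT v (φ x)) hymem hφymem
          have hyφy' : T.dist (φ y) y = k := by rw [SimpleGraph.dist_comm]; exact h2
          have hkone : k = 1 := by rcases h2p with h | h <;> omega
          have hxmem : x ∈ (tpath hT v (φ x)).support :=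
            mem_tpath_of_dist_add hT (by omega)
          have hfyx : φ y = x :=
            eq_of_dist_eq_on_path hT (tpath_isPath hT v (φ x)) hφymem hxmem (by omega)
          have hyfx : y = φ x := by
            have hz : T.dist y (φ x) = 0 := by omega
            exact (hT.isConnected y (φ x)).dist_eq_zero_iff.mp hz
          have hadjx : T.Adj x (φ x) := by
            apply SimpleGraph.dist_eq_one_iff_adj.mp
            omega
          exact hninv x (φ x) hadjx rfl (by rw [← hyfx]; exact hfyx)
        · omega
      rw [hxs]
      exact ⟨h3, h4, h2⟩
  have hinj : Function.Injective w := by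
    intro i j hij
    have hi := (main i).1
    have hj := (main j).1
    rw [hij, hj] at hi
    exact hi.symm
  obtain ⟨i, j, hne', heq⟩ := Finite.exists_ne_map_eq_of_infinite w
  exact hne' (hinj heq)

/-- uniqueness core: two disjoint inverted edges are impossible -/
lemma inverted_core (hT : T.IsTree) (φ : T ≃g T) {a b c d : V}
    (hab : T.Adj a b) (hcd : T.Adj c d) (hfa : φ a = b) (hfb : φ b = a)
    (hfc : φ c = d) (hfd : φ d = c)
    (hac : a ≠ c) (had : a ≠ d) (hbc : b ≠ c) (hbd : b ≠ d)
    (h1 : T.dist b c ≤ T.dist a c) (h2 : T.dist b c ≤ T.dist b d) : False := by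
  set m := T.dist b c with hm
  have hm1 : 1 ≤ m := hT.isConnected.pos_dist_of_ne hbc
  have hca : T.dist c a = T.dist a c := SimpleGraph.dist_comm ..
  have hcb : T.dist c b = T.dist b c := SimpleGraph.dist_comm ..
  have hdc : T.dist d c = T.dist c d := SimpleGraph.dist_comm ..
  have hba : T.dist b a = 1 := SimpleGraph.dist_eq_one_iff_adj.mpr hab.symm
  have hcd1 : T.dist c d = 1 := SimpleGraph.dist_eq_one_iff_adj.mpr hcd
  have hdac : T.dist a c = m + 1 := by
    rcases adj_dist_cases hT hab c with h | h <;> omega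
  have hdbd : T.dist b d = m + 1 := by
    rcases adj_dist_cases hT hcd b with h | h <;> omega
  have hdad : T.dist a d = m := by
    have hi := iso_dist hT φ a d
    rw [hfa, hfd] at hi
    omega
  have hdP : d ∉ (tpath hT b c).support := by
    intro hmem
    have := dist_split hT (tpath_isPath hT b c) hmem
    omega
  have hconc : ((tpath hT b c).concat hcd).IsPath :=
    isPath_concat (tpath_isPath hT b c) hcd hdP
  have haP : a ∉ ((tpath hT b c).concat hcd).support := by
    rw [SimpleGraph.Walk.support_concat]
    intro hmem
    rw [List.mem_append] at hmem
    rcases hmem with hmem | hmem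
    · have := dist_split hT (tpath_isPath hT b c) hmem
      omega
    · exact had (List.mem_singleton.mp hmem)
  have hW : (SimpleGraph.Walk.cons hab ((tpath hT b c).concat hcd)).IsPath :=
    (SimpleGraph.Walk.cons_isPath_iff _ _).mpr ⟨hconc, haP⟩
  have hlen := path_length_eq_dist hT _ hW
  rw [SimpleGraph.Walk.length_cons, SimpleGraph.Walk.length_concat, tpath_length] at hlen
  omega

lemma inverted_unique (hT : T.IsTree) (φ : T ≃g T) {a b c d : V}
    (hab : T.Adj a b) (hcd : T.Adj c d) (hfa : φ a = b) (hfb : φ b = a)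
    (hfc : φ c = d) (hfd : φ d = c) :
    (a = c ∧ b = d) ∨ (a = d ∧ b = c) := by
  by_cases hac : a = c
  · subst hac; exact Or.inl ⟨rfl, by rw [← hfa, hfc]⟩
  by_cases had : a = d
  · subst had; exact Or.inr ⟨rfl, by rw [← hfa, hfd]⟩
  by_cases hbc : b = c
  · subst hbc; exact Or.inr ⟨by rw [← hfb, hfc], rfl⟩
  by_cases hbd : b = d
  · subst hbd; exact Or.inl ⟨by rw [← hfb, hfd], rfl⟩
  exfalso
  have hsplit : (T.dist b c ≤ T.dist a c ∧ T.dist b c ≤ T.dist b d) ∨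
      (T.dist b d ≤ T.dist a d ∧ T.dist b d ≤ T.dist b c) ∨
      (T.dist a c ≤ T.dist b c ∧ T.dist a c ≤ T.dist a d) ∨
      (T.dist a d ≤ T.dist b d ∧ T.dist a d ≤ T.dist a c) := by omega
  rcases hsplit with h | h | h | h
  · exact inverted_core hT φ hab hcd hfa hfb hfc hfd hac had hbc hbd h.1 h.2
  · exact inverted_core hT φ hab hcd.symm hfa hfb hfd hfc had hac hbd hbc h.1 h.2
  · exact inverted_core hT φ hab.symm hcd hfb hfa hfc hfd hbc hbd hac had h.1 h.2
  · exact inverted_core hT φ hab.symm hcd.symm hfb hfa hfd hfc hbd hbc had hac h.1 h.2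

end Inverted



section Counting

open scoped Classical

variable [Fintype V]

/-- the internal fixed vertices of φ -/
noncomputable def Av (T : SimpleGraph V) (φ : T ≃g T) : Finset V :=
  Finset.univ.filter (fun v : V => ¬ IsLeafVert T v ∧ φ v = v)

/-- internal edges fixed setwise -/
noncomputable def Bs (T : SimpleGraph V) (φ : T ≃g T) : Finset (Sym2 V) :=
  Finset.univ.filter (fun e : Sym2 V =>
    e ∈ T.edgeSet ∧ (∀ v ∈ e, ¬ IsLeafVert T v) ∧ Sym2.map φ e = e)

/-- internal edges fixed pointwise -/
noncomputable def Bp (T : SimpleGraph V) (φ : T ≃g T) : Finset (Sym2 V) :=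
  Finset.univ.filter (fun e : Sym2 V =>
    e ∈ T.edgeSet ∧ (∀ v ∈ e, ¬ IsLeafVert T v) ∧ ∀ v ∈ e, φ v = v)

/-- internal fixed arcs -/
noncomputable def Ca (T : SimpleGraph V) (φ : T ≃g T) : Finset (V × V) :=
  Finset.univ.filter (fun p : V × V => T.Adj p.1 p.2 ∧ ¬ IsLeafVert T p.1 ∧
    ¬ IsLeafVert T p.2 ∧ φ p.1 = p.1 ∧ φ p.2 = p.2)

lemma map_of_pointwise (φ : T ≃g T) {e : Sym2 V} (h : ∀ v ∈ e, φ v = v) :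
    Sym2.map φ e = e := by
  induction e with
  | _ a b =>
    rw [Sym2.map_pair_eq, h a (Sym2.mem_mk_left a b), h b (Sym2.mem_mk_right a b)]

lemma card_Ca (hT : T.IsTree) (φ : T ≃g T) : (Ca T φ).card = 2 * (Bp T φ).card := by
  rw [Finset.card_eq_sum_card_fiberwise (f := fun p : V × V => s(p.1, p.2)) (t := Bp T φ)]
  · refine (Finset.sum_const_nat ?_).trans (mul_comm _ 2)
    intro e he
    simp only [Bp, Finset.mem_filter] at he
    obtain ⟨-, hedge, hint, hfix⟩ := he
    induction e with
    | _ a b =>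
      have hadj : T.Adj a b := T.mem_edgeSet.mp hedge
      have hne : a ≠ b := hadj.ne
      have : (Ca T φ).filter (fun p => s(p.1, p.2) = s(a, b)) = {(a, b), (b, a)} := by
        ext p
        simp only [Finset.mem_filter, Ca, Finset.mem_univ, true_and, Finset.mem_insert,
          Finset.mem_singleton]
        constructor
        · rintro ⟨⟨-, -, -, -, -⟩, heq⟩
          rcases Sym2.eq_iff.mp heq with ⟨h1, h2⟩ | ⟨h1, h2⟩
          · left; exact Prod.ext h1 h2
          · right; exact Prod.ext h1 h2
        · rintro (rfl | rfl)
          · exact ⟨⟨hadj, hint a (Sym2.mem_mk_left a b), hint b (Sym2.mem_mk_right a b),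
              hfix a (Sym2.mem_mk_left a b), hfix b (Sym2.mem_mk_right a b)⟩, rfl⟩
          · exact ⟨⟨hadj.symm, hint b (Sym2.mem_mk_right a b), hint a (Sym2.mem_mk_left a b),
              hfix b (Sym2.mem_mk_right a b), hfix a (Sym2.mem_mk_left a b)⟩, Sym2.eq_swap⟩
      rw [this]
      rw [Finset.card_insert_of_notMem (by simp [Prod.ext_iff, hne, hne.symm]),
        Finset.card_singleton]
  · intro p hp
    simp only [Finset.mem_coe, Ca, Finset.mem_filter, Finset.mem_univ, true_and] at hp
    obtain ⟨hadj, h1, h2, h3, h4⟩ := hp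
    simp only [Finset.mem_coe, Bp, Finset.mem_filter, Finset.mem_univ, true_and]
    refine ⟨T.mem_edgeSet.mpr hadj, ?_, ?_⟩ <;> intro z hz <;>
      rcases Sym2.mem_iff.mp hz with rfl | rfl <;> assumption

lemma card_Bs_of_fixed (hT : T.IsTree) (φ : T ≃g T) {r : V} (hrf : φ r = r) :
    (Bs T φ).card = (Bp T φ).card := by
  congr 1
  apply Finset.ext
  intro e
  simp only [Bs, Bp, Finset.mem_filter, Finset.mem_univ, true_and,
    and_congr_right_iff]
  intro hedge hint
  constructor
  · intro hmap
    induction e with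
    | _ a b =>
      have hadj : T.Adj a b := T.mem_edgeSet.mp hedge
      rw [Sym2.map_pair_eq] at hmap
      rcases Sym2.eq_iff.mp hmap with ⟨h1, h2⟩ | ⟨h1, h2⟩
      · intro z hz; rcases Sym2.mem_iff.mp hz with rfl | rfl <;> assumption
      · exfalso
        have hd := iso_dist hT φ r a
        rw [hrf, h1] at hd
        exact adj_dist_ne hT hadj r hd.symm
  · exact map_of_pointwise φ

lemma exists_internal_fixed_root (hT : T.IsTree) (hcard : 3 ≤ Fintype.card V)
    (φ : T ≃g T) (x0 : V) (h0 : φ x0 = x0) : ∃ r, ¬ IsLeafVert T r ∧ φ r = r := by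
  by_cases hl : IsLeafVert T x0
  · obtain ⟨u, hu, hun⟩ := hl
    have hadj' : T.Adj x0 (φ u) := by
      have := φ.map_adj_iff.mpr hu
      rwa [h0] at this
    have hfu : φ u = u := hun _ hadj'
    refine ⟨u, fun hlu => no_adj_leaves hT hcard hu ⟨u, hu, hun⟩ hlu, hfu⟩
  · exact ⟨x0, hl, h0⟩

lemma par_internal (hT : T.IsTree) {r v : V} (hrl : ¬ IsLeafVert T r) (hvr : v ≠ r) :
    ¬ IsLeafVert T (par hT r v) := by
  by_cases hy : par hT r v = r
  · rwa [hy]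
  · have h1 := par_dist hT hvr
    have h2 := par_dist hT hy
    have hne : v ≠ par hT r (par hT r v) := by
      intro h
      rw [← h] at h2
      omega
    exact not_leaf_of_two (par_adj hT hvr).symm (par_adj hT hy) hne

lemma par_fixed (hT : T.IsTree) (φ : T ≃g T) {r v : V} (hrf : φ r = r) (hvf : φ v = v)
    (hvr : v ≠ r) : φ (par hT r v) = par hT r v := by
  apply par_eq hT hvr
  · have := φ.map_adj_iff.mpr (par_adj hT hvr)
    rwa [hvf] at this
  · have hd := iso_dist hT φ (par hT r v) r
    rw [hrf] at hd
    rw [hd]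
    exact par_dist hT hvr

lemma card_Av_of_fixed (hT : T.IsTree) (hcard : 3 ≤ Fintype.card V) (φ : T ≃g T)
    {r : V} (hrl : ¬ IsLeafVert T r) (hrf : φ r = r) :
    (Av T φ).card = (Bp T φ).card + 1 := by
  have hrAv : r ∈ Av T φ := by simp [Av, hrl, hrf]
  rw [← Finset.card_erase_add_one hrAv]
  congr 1
  apply Finset.card_bij (fun v _ => s(v, par hT r v))
  · -- maps into Bp
    intro v hv
    rw [Finset.mem_erase] at hv
    obtain ⟨hvr, hv⟩ := hv
    simp only [Av, Finset.mem_filter, Finset.mem_univ, true_and] at hv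
    obtain ⟨hvl, hvf⟩ := hv
    simp only [Bp, Finset.mem_filter, Finset.mem_univ, true_and]
    refine ⟨T.mem_edgeSet.mpr (par_adj hT hvr), ?_, ?_⟩
    · intro z hz
      rcases Sym2.mem_iff.mp hz with rfl | rfl
      · exact hvl
      · exact par_internal hT hrl hvr
    · intro z hz
      rcases Sym2.mem_iff.mp hz with rfl | rfl
      · exact hvf
      · exact par_fixed hT φ hrf hvf hvr
  · -- injective
    intro v1 hv1 v2 hv2 heq
    rw [Finset.mem_erase] at hv1 hv2
    rcases Sym2.eq_iff.mp heq with ⟨h1, -⟩ | ⟨h1, h2⟩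
    · exact h1
    · exfalso
      have d1 := par_dist hT hv1.1
      have d2 := par_dist hT hv2.1
      rw [h2] at d1
      rw [← h1] at d2
      omega
  · -- surjective
    intro e he
    simp only [Bp, Finset.mem_filter, Finset.mem_univ, true_and] at he
    obtain ⟨hedge, hint, hfix⟩ := he
    induction e with
    | _ a b =>
      have hadj : T.Adj a b := T.mem_edgeSet.mp hedge
      have hra : T.dist a r = T.dist r a := SimpleGraph.dist_comm ..
      have hrb : T.dist b r = T.dist r b := SimpleGraph.dist_comm ..
      have hmem : ∀ x : V, ¬ IsLeafVert T x → φ x = x → x ≠ r → x ∈ (Av T φ).erase r := by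
        intro x h1 h2 h3
        rw [Finset.mem_erase]
        exact ⟨h3, by simp [Av, h1, h2]⟩
      rcases adj_dist_cases hT hadj r with hc | hc
      · -- dist r a = dist r b + 1, so a is farther; par r a = b
        have har : a ≠ r := by
          intro h
          rw [h, SimpleGraph.dist_self] at hc
          omega
        have hpar : b = par hT r a := par_eq hT har hadj (by omega)
        refine ⟨a, hmem a (hint a (Sym2.mem_mk_left a b)) (hfix a (Sym2.mem_mk_left a b)) har, ?_⟩
        rw [← hpar]
      · have hbr : b ≠ r := by
          intro h
          rw [h, SimpleGraph.dist_self] at hc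
          omega
        have hpar : a = par hT r b := par_eq hT hbr hadj.symm (by omega)
        refine ⟨b, hmem b (hint b (Sym2.mem_mk_right a b)) (hfix b (Sym2.mem_mk_right a b)) hbr, ?_⟩
        rw [← hpar, Sym2.eq_swap]

lemma count_case_nofix (hT : T.IsTree) (hcard : 3 ≤ Fintype.card V) (φ : T ≃g T)
    (hnofix : ∀ x : V, φ x ≠ x) :
    (Av T φ).card = 0 ∧ (Bs T φ).card = 1 ∧ (Bp T φ).card = 0 := by
  obtain ⟨a, b, hadj, hfa, hfb⟩ := exists_inverted hT φ hnofix
  have hint : ∀ x y : V, T.Adj x y → φ x = y → φ y = x → ¬ IsLeafVert T x := by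
    intro x y hxy hx hy hlx
    have hly : IsLeafVert T y := by
      rw [← hx]
      exact (iso_leaf φ x).mpr hlx
    exact no_adj_leaves hT hcard hxy hlx hly
  refine ⟨?_, ?_, ?_⟩
  · rw [Finset.card_eq_zero, Av, Finset.filter_eq_empty_iff]
    rintro v - ⟨-, hv⟩
    exact hnofix v hv
  · rw [Finset.card_eq_one]
    refine ⟨s(a, b), ?_⟩
    apply Finset.eq_singleton_iff_unique_mem.mpr
    constructor
    · simp only [Bs, Finset.mem_filter, Finset.mem_univ, true_and]
      refine ⟨T.mem_edgeSet.mpr hadj, ?_, ?_⟩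
      · intro z hz
        rcases Sym2.mem_iff.mp hz with rfl | rfl
        · exact hint z b hadj hfa hfb
        · exact hint z a hadj.symm hfb hfa
      · rw [Sym2.map_pair_eq, hfa, hfb, Sym2.eq_swap]
    · intro e he
      simp only [Bs, Finset.mem_filter, Finset.mem_univ, true_and] at he
      obtain ⟨hedge, -, hmap⟩ := he
      induction e with
      | _ c d =>
        have hcd : T.Adj c d := T.mem_edgeSet.mp hedge
        rw [Sym2.map_pair_eq] at hmap
        rcases Sym2.eq_iff.mp hmap with ⟨h1, h2⟩ | ⟨h1, h2⟩
        · exact absurd h1 (hnofix c)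
        · rcases inverted_unique hT φ hcd hadj h1 h2 hfa hfb with ⟨rfl, rfl⟩ | ⟨rfl, rfl⟩
          · rfl
          · exact Sym2.eq_swap
  · rw [Finset.card_eq_zero, Bp, Finset.filter_eq_empty_iff]
    rintro e - ⟨hedge, -, hfix⟩
    induction e with
    | _ c d => exact hnofix c (hfix c (Sym2.mem_mk_left c d))

/-- The key per-automorphism counting identity. -/
lemma key_count (hT : T.IsTree) (hcard : 3 ≤ Fintype.card V) (φ : T ≃g T) :
    (Av T φ).card + (Bs T φ).card = 1 + (Ca T φ).card := by
  rw [card_Ca hT φ]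
  by_cases hfix : ∃ x : V, φ x = x
  · obtain ⟨x0, h0⟩ := hfix
    obtain ⟨r, hrl, hrf⟩ := exists_internal_fixed_root hT hcard φ x0 h0
    rw [card_Bs_of_fixed hT φ hrf, card_Av_of_fixed hT hcard φ hrl hrf]
    ring
  · push_neg at hfix
    obtain ⟨h1, h2, h3⟩ := count_case_nofix hT hcard φ hfix
    rw [h1, h2, h3]

end Counting



section Glue

open scoped Classical

variable [Fintype V]

noncomputable instance fintypeAut (T : SimpleGraph V) : Fintype (T ≃g T) :=
  Fintype.ofInjective (fun φ => (φ : V → V)) (fun a b h => by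
    ext x
    exact congrFun h x)

instance mulActionA (T : SimpleGraph V) :
    MulAction (T ≃g T) {v : V // ¬ IsLeafVert T v} where
  smul φ x := ⟨φ x.1, fun h => x.2 ((iso_leaf φ x.1).mp h)⟩
  one_smul x := Subtype.ext rfl
  mul_smul φ ψ x := Subtype.ext rfl

lemma smulB_aux (φ : T ≃g T) {e : Sym2 V}
    (he : e ∈ T.edgeSet ∧ ∀ v ∈ e, ¬ IsLeafVert T v) :
    Sym2.map φ e ∈ T.edgeSet ∧ ∀ v ∈ Sym2.map φ e, ¬ IsLeafVert T v := by
  induction e with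
  | _ a b =>
    rw [Sym2.map_pair_eq]
    obtain ⟨h1, h2⟩ := he
    refine ⟨T.mem_edgeSet.mpr (φ.map_adj_iff.mpr (T.mem_edgeSet.mp h1)), ?_⟩
    intro z hz
    rcases Sym2.mem_iff.mp hz with rfl | rfl
    · exact fun h => h2 a (Sym2.mem_mk_left a b) ((iso_leaf φ a).mp h)
    · exact fun h => h2 b (Sym2.mem_mk_right a b) ((iso_leaf φ b).mp h)

instance mulActionB (T : SimpleGraph V) :
    MulAction (T ≃g T) {e : Sym2 V // e ∈ T.edgeSet ∧ ∀ v ∈ e, ¬ IsLeafVert T v} where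
  smul φ e := ⟨Sym2.map φ e.1, smulB_aux φ e.2⟩
  one_smul e := Subtype.ext (by
    show Sym2.map ⇑(1 : T ≃g T) e.1 = e.1
    have h : ⇑(1 : T ≃g T) = id := rfl
    rw [h, Sym2.map_id]
    rfl)
  mul_smul φ ψ e := Subtype.ext (by
    show Sym2.map ⇑(φ * ψ) e.1 = Sym2.map ⇑φ (Sym2.map ⇑ψ e.1)
    rw [Sym2.map_map]
    rfl)

instance mulActionC (T : SimpleGraph V) :
    MulAction (T ≃g T)
      {p : V × V // T.Adj p.1 p.2 ∧ ¬ IsLeafVert T p.1 ∧ ¬ IsLeafVert T p.2} where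
  smul φ p := ⟨(φ p.1.1, φ p.1.2), φ.map_adj_iff.mpr p.2.1,
    fun h => p.2.2.1 ((iso_leaf φ _).mp h), fun h => p.2.2.2 ((iso_leaf φ _).mp h)⟩
  one_smul p := Subtype.ext rfl
  mul_smul φ ψ p := Subtype.ext rfl

lemma card_fixedBy_A (T : SimpleGraph V) (φ : T ≃g T) :
    Fintype.card (MulAction.fixedBy {v : V // ¬ IsLeafVert T v} φ) = (Av T φ).card := by
  rw [← Fintype.card_coe (Av T φ)]
  apply Fintype.card_congr
  refine ⟨fun x => ⟨x.1.1, ?_⟩, fun v => ⟨⟨v.1, ?_⟩, ?_⟩, fun x => ?_, fun v => ?_⟩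
  · have hfix : φ x.1.1 = x.1.1 := congrArg Subtype.val x.2
    simp only [Av, Finset.mem_filter, Finset.mem_univ, true_and]
    exact ⟨x.1.2, hfix⟩
  · have hv := v.2
    simp only [Av, Finset.mem_filter, Finset.mem_univ, true_and] at hv
    exact hv.1
  · have hv := v.2
    simp only [Av, Finset.mem_filter, Finset.mem_univ, true_and] at hv
    exact Subtype.ext hv.2
  · apply Subtype.ext; apply Subtype.ext; rfl
  · apply Subtype.ext; rfl

lemma card_fixedBy_B (T : SimpleGraph V) (φ : T ≃g T) :
    Fintype.card (MulAction.fixedBy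
      {e : Sym2 V // e ∈ T.edgeSet ∧ ∀ v ∈ e, ¬ IsLeafVert T v} φ) = (Bs T φ).card := by
  rw [← Fintype.card_coe (Bs T φ)]
  apply Fintype.card_congr
  refine ⟨fun x => ⟨x.1.1, ?_⟩, fun e => ⟨⟨e.1, ?_, ?_⟩, ?_⟩, fun x => ?_, fun e => ?_⟩
  · have hfix : Sym2.map ⇑φ x.1.1 = x.1.1 := congrArg Subtype.val x.2
    simp only [Bs, Finset.mem_filter, Finset.mem_univ, true_and]
    exact ⟨x.1.2.1, x.1.2.2, hfix⟩
  · have he := e.2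
    simp only [Bs, Finset.mem_filter, Finset.mem_univ, true_and] at he
    exact he.1
  · have he := e.2
    simp only [Bs, Finset.mem_filter, Finset.mem_univ, true_and] at he
    exact he.2.1
  · have he := e.2
    simp only [Bs, Finset.mem_filter, Finset.mem_univ, true_and] at he
    exact Subtype.ext he.2.2
  · apply Subtype.ext; apply Subtype.ext; rfl
  · apply Subtype.ext; rfl

lemma card_fixedBy_C (T : SimpleGraph V) (φ : T ≃g T) :
    Fintype.card (MulAction.fixedBy
      {p : V × V // T.Adj p.1 p.2 ∧ ¬ IsLeafVert T p.1 ∧ ¬ IsLeafVert T p.2} φ)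
      = (Ca T φ).card := by
  rw [← Fintype.card_coe (Ca T φ)]
  apply Fintype.card_congr
  refine ⟨fun x => ⟨x.1.1, ?_⟩, fun p => ⟨⟨p.1, ?_⟩, ?_⟩, fun x => ?_, fun p => ?_⟩
  · have hfix : (φ x.1.1.1, φ x.1.1.2) = x.1.1 := congrArg Subtype.val x.2
    simp only [Ca, Finset.mem_filter, Finset.mem_univ, true_and]
    exact ⟨x.1.2.1, x.1.2.2.1, x.1.2.2.2, congrArg Prod.fst hfix, congrArg Prod.snd hfix⟩
  · have hp := p.2
    simp only [Ca, Finset.mem_filter, Finset.mem_univ, true_and] at hp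
    exact ⟨hp.1, hp.2.1, hp.2.2.1⟩
  · have hp := p.2
    simp only [Ca, Finset.mem_filter, Finset.mem_univ, true_and] at hp
    apply Subtype.ext
    exact Prod.ext hp.2.2.2.1 hp.2.2.2.2
  · apply Subtype.ext; apply Subtype.ext; rfl
  · apply Subtype.ext; rfl

end Glue


end DissymmetryAux

open DissymmetryAux MulAction in
/-- The dissymmetry theorem for trees restricted to internal nodes: in a finite tree with
at least 3 vertices, the number of `Aut(T)`-orbits of internal vertices plus the number of
`Aut(T)`-orbits of edges with both endpoints internal equals `1` plus the number of
`Aut(T)`-orbits of arcs with both endpoints internal. -/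
theorem dissymmetry_internal {V : Type} [Fintype V]
    (T : SimpleGraph V) (hT : T.IsTree) (hcard : 3 ≤ Fintype.card V) :
    Nat.card (Quot (fun (u v : {v : V // ¬ IsLeafVert T v}) =>
        ∃ φ : T ≃g T, φ u.val = v.val)) +
      Nat.card (Quot (fun (e e' : {e : Sym2 V // e ∈ T.edgeSet ∧ ∀ v ∈ e, ¬ IsLeafVert T v}) =>
        ∃ φ : T ≃g T, Sym2.map (fun x => φ x) e.val = e'.val)) =
    1 + Nat.card (Quot
        (fun (p q : {p : V × V // T.Adj p.1 p.2 ∧ ¬ IsLeafVert T p.1 ∧ ¬ IsLeafVert T p.2}) =>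
        ∃ φ : T ≃g T, φ p.val.1 = q.val.1 ∧ φ p.val.2 = q.val.2)) := by
  classical
  have hrelA : (fun (u v : {v : V // ¬ IsLeafVert T v}) =>
      ∃ φ : T ≃g T, φ u.val = v.val)
      = (orbitRel (T ≃g T) {v : V // ¬ IsLeafVert T v}).r := by
    funext u v
    apply propext
    constructor
    · rintro ⟨φ, h⟩
      refine mem_orbit_iff.mpr ⟨φ⁻¹, Subtype.ext ?_⟩
      show (φ⁻¹ : T ≃g T) v.val = u.val
      rw [← h]
      exact RelIso.inv_apply_self φ u.val
    · intro h
      obtain ⟨g, hg⟩ := mem_orbit_iff.mp h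
      refine ⟨g⁻¹, ?_⟩
      have hg' : (g : T ≃g T) v.val = u.val := congrArg Subtype.val hg
      rw [← hg']
      exact RelIso.inv_apply_self g v.val
  have hrelB : (fun (e e' : {e : Sym2 V // e ∈ T.edgeSet ∧ ∀ v ∈ e, ¬ IsLeafVert T v}) =>
      ∃ φ : T ≃g T, Sym2.map (fun x => φ x) e.val = e'.val)
      = (orbitRel (T ≃g T) {e : Sym2 V // e ∈ T.edgeSet ∧ ∀ v ∈ e, ¬ IsLeafVert T v}).r := by
    funext e e'
    apply propext
    constructor
    · rintro ⟨φ, h⟩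
      refine mem_orbit_iff.mpr ⟨φ⁻¹, Subtype.ext ?_⟩
      show Sym2.map ⇑(φ⁻¹ : T ≃g T) e'.val = e.val
      rw [← h, Sym2.map_map]
      have hid : (⇑(φ⁻¹ : T ≃g T) ∘ fun x => φ x) = id :=
        funext fun x => RelIso.inv_apply_self φ x
      rw [hid, Sym2.map_id]
      rfl
    · intro h
      obtain ⟨g, hg⟩ := mem_orbit_iff.mp h
      refine ⟨g⁻¹, ?_⟩
      have hg' : Sym2.map ⇑(g : T ≃g T) e'.val = e.val := congrArg Subtype.val hg
      rw [← hg', Sym2.map_map]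
      have hid : ((fun x => (g⁻¹ : T ≃g T) x) ∘ ⇑(g : T ≃g T)) = id :=
        funext fun x => RelIso.inv_apply_self g x
      rw [hid, Sym2.map_id]
      rfl
  have hrelC : (fun (p q : {p : V × V // T.Adj p.1 p.2 ∧ ¬ IsLeafVert T p.1 ∧
      ¬ IsLeafVert T p.2}) =>
      ∃ φ : T ≃g T, φ p.val.1 = q.val.1 ∧ φ p.val.2 = q.val.2)
      = (orbitRel (T ≃g T) {p : V × V // T.Adj p.1 p.2 ∧ ¬ IsLeafVert T p.1 ∧
          ¬ IsLeafVert T p.2}).r := by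
    funext p q
    apply propext
    constructor
    · rintro ⟨φ, h1, h2⟩
      refine mem_orbit_iff.mpr ⟨φ⁻¹, Subtype.ext ?_⟩
      show ((φ⁻¹ : T ≃g T) q.val.1, (φ⁻¹ : T ≃g T) q.val.2) = p.val
      rw [← h1, ← h2, RelIso.inv_apply_self, RelIso.inv_apply_self]
    · intro h
      obtain ⟨g, hg⟩ := mem_orbit_iff.mp h
      have hg' : ((g : T ≃g T) q.val.1, (g : T ≃g T) q.val.2) = p.val :=
        congrArg Subtype.val hg
      have hg1 : (g : T ≃g T) q.val.1 = p.val.1 := congrArg Prod.fst hg'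
      have hg2 : (g : T ≃g T) q.val.2 = p.val.2 := congrArg Prod.snd hg'
      refine ⟨g⁻¹, ?_, ?_⟩
      · rw [← hg1]; exact RelIso.inv_apply_self g q.val.1
      · rw [← hg2]; exact RelIso.inv_apply_self g q.val.2
  rw [hrelA, hrelB, hrelC]
  have hc1 : Nat.card (Quot (orbitRel (T ≃g T) {v : V // ¬ IsLeafVert T v}).r)
      = Fintype.card (Quotient (orbitRel (T ≃g T) {v : V // ¬ IsLeafVert T v})) :=
    Nat.card_eq_fintype_card (α := Quotient (orbitRel (T ≃g T) {v : V // ¬ IsLeafVert T v}))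
  have hc2 : Nat.card (Quot (orbitRel (T ≃g T)
        {e : Sym2 V // e ∈ T.edgeSet ∧ ∀ v ∈ e, ¬ IsLeafVert T v}).r)
      = Fintype.card (Quotient (orbitRel (T ≃g T)
        {e : Sym2 V // e ∈ T.edgeSet ∧ ∀ v ∈ e, ¬ IsLeafVert T v})) :=
    Nat.card_eq_fintype_card (α := Quotient (orbitRel (T ≃g T)
        {e : Sym2 V // e ∈ T.edgeSet ∧ ∀ v ∈ e, ¬ IsLeafVert T v}))
  have hc3 : Nat.card (Quot (orbitRel (T ≃g T)
        {p : V × V // T.Adj p.1 p.2 ∧ ¬ IsLeafVert T p.1 ∧ ¬ IsLeafVert T p.2}).r)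
      = Fintype.card (Quotient (orbitRel (T ≃g T)
        {p : V × V // T.Adj p.1 p.2 ∧ ¬ IsLeafVert T p.1 ∧ ¬ IsLeafVert T p.2})) :=
    Nat.card_eq_fintype_card (α := Quotient (orbitRel (T ≃g T)
        {p : V × V // T.Adj p.1 p.2 ∧ ¬ IsLeafVert T p.1 ∧ ¬ IsLeafVert T p.2}))
  rw [hc1, hc2, hc3]
  have burnA := MulAction.sum_card_fixedBy_eq_card_orbits_mul_card_group (T ≃g T)
    {v : V // ¬ IsLeafVert T v}
  have burnB := MulAction.sum_card_fixedBy_eq_card_orbits_mul_card_group (T ≃g T)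
    {e : Sym2 V // e ∈ T.edgeSet ∧ ∀ v ∈ e, ¬ IsLeafVert T v}
  have burnC := MulAction.sum_card_fixedBy_eq_card_orbits_mul_card_group (T ≃g T)
    {p : V × V // T.Adj p.1 p.2 ∧ ¬ IsLeafVert T p.1 ∧ ¬ IsLeafVert T p.2}
  have hkey : ∀ φ : T ≃g T,
      Fintype.card (fixedBy {v : V // ¬ IsLeafVert T v} φ)
      + Fintype.card (fixedBy {e : Sym2 V // e ∈ T.edgeSet ∧ ∀ v ∈ e, ¬ IsLeafVert T v} φ)
      = 1 + Fintype.card (fixedBy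
          {p : V × V // T.Adj p.1 p.2 ∧ ¬ IsLeafVert T p.1 ∧ ¬ IsLeafVert T p.2} φ) := by
    intro φ
    rw [card_fixedBy_A, card_fixedBy_B, card_fixedBy_C]
    exact key_count hT hcard φ
  have hsum : ∑ φ : T ≃g T,
      (Fintype.card (fixedBy {v : V // ¬ IsLeafVert T v} φ)
      + Fintype.card (fixedBy {e : Sym2 V // e ∈ T.edgeSet ∧ ∀ v ∈ e, ¬ IsLeafVert T v} φ))
      = ∑ φ : T ≃g T, (1 + Fintype.card (fixedBy
          {p : V × V // T.Adj p.1 p.2 ∧ ¬ IsLeafVert T p.1 ∧ ¬ IsLeafVert T p.2} φ)) :=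
    Finset.sum_congr rfl (fun φ _ => hkey φ)
  rw [Finset.sum_add_distrib, Finset.sum_add_distrib, burnA, burnB, burnC,
    Finset.sum_const, Finset.card_univ, smul_eq_mul, mul_one] at hsum
  have hpos : 0 < Fintype.card (T ≃g T) := Fintype.card_pos_iff.mpr ⟨1⟩
  apply Nat.eq_of_mul_eq_mul_right hpos
  rw [add_mul, add_mul, one_mul]
  exact hsum
end
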